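/- arXiv:1909.12565 — 7 statements merged into one kernel-verified Lean document; each statement's English description precedes it below -/
import Mathlib

section
/- Let T be a real 3×3 matrix (the correlation matrix of a two-qubit state) and let U = Tᵀ T, a real symmetric positive-semidefinite matrix with eigenvalues η₁ ≥ η₂ ≥ η₃ ≥ 0. Suppose the state violates the Bell-CHSH inequality, i.e. 1 ≤ η₁ + η₂ ≤ 2 (equivalently, some pair of eigenvalues of U at distinct indices sums to at least 1, and every such pair sums to at most 2). Let μ be a real number with 0 ≤ μ ≤ 1/√2. Then the eigenvalues η′ᵢ = μ⁴ηᵢ of the matrix (μ²T)ᵀ(μ²T) associated to the output of the Buzek–Hillery state-dependent local cloner satisfy μ⁴ ≤ η′₁ + η′₂ ≤ 2μ⁴, and in particular 1/4 ≤ η′₁ + η′₂ ≤ 1/2 when μ = 1/√2; hence η′₁ + η′₂ ≤ 1/2 < 1, so the output state does not violate the Bell-CHSH inequality. (Impossibility of broadcasting Bell non-locality by the local state-dependent cloner.) -/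
open Matrix

lemma smul_mem_spectrum_smul (c : ℝ) (hc : 0 ≤ c) (A : Matrix (Fin 3) (Fin 3) ℝ)
    (η : ℝ) (h : η ∈ spectrum ℝ A) : c * η ∈ spectrum ℝ (c • A) := by
  rcases eq_or_lt_of_le hc with hc0 | hc0
  · simp only [← hc0, zero_mul, zero_smul]
    exact spectrum.zero_mem ℝ not_isUnit_zero
  · rw [spectrum.smul_eq_smul c A ⟨η, h⟩]
    exact ⟨η, h, rfl⟩

/-- Impossibility of broadcasting Bell non-locality by the Buzek–Hillery
state-dependent *local* cloner.  `T` is the correlation matrix of a two-qubit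
state, `η₁ ≥ η₂ ≥ η₃ ≥ 0` are the eigenvalues of the Gram matrix `Tᵀ * T`,
and the Bell-CHSH violation of the input reads `1 ≤ η₁ + η₂ ≤ 2`.  The local
cloner scales `T` to `μ² • T`, hence the eigenvalues to `μ⁴ • ηᵢ`, and the
output never violates Bell-CHSH. -/
theorem broadcasting_bell_nonlocality_local_cloner_impossible
    (T : Matrix (Fin 3) (Fin 3) ℝ) (η₁ η₂ η₃ : ℝ)
    (hmem₁ : η₁ ∈ spectrum ℝ (Tᵀ * T))
    (hmem₂ : η₂ ∈ spectrum ℝ (Tᵀ * T))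
    (hmem₃ : η₃ ∈ spectrum ℝ (Tᵀ * T))
    (h12 : η₂ ≤ η₁) (h23 : η₃ ≤ η₂) (h3 : 0 ≤ η₃)
    (hviol_lo : 1 ≤ η₁ + η₂) (hviol_hi : η₁ + η₂ ≤ 2)
    (μ : ℝ) (hμ0 : 0 ≤ μ) (hμ1 : μ ≤ 1 / Real.sqrt 2) :
    (μ ^ 4 * η₁ ∈ spectrum ℝ ((μ ^ 2 • T)ᵀ * (μ ^ 2 • T)) ∧
      μ ^ 4 * η₂ ∈ spectrum ℝ ((μ ^ 2 • T)ᵀ * (μ ^ 2 • T)) ∧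
      μ ^ 4 * η₃ ∈ spectrum ℝ ((μ ^ 2 • T)ᵀ * (μ ^ 2 • T))) ∧
    (μ ^ 4 ≤ μ ^ 4 * η₁ + μ ^ 4 * η₂ ∧ μ ^ 4 * η₁ + μ ^ 4 * η₂ ≤ 2 * μ ^ 4) ∧
    (μ = 1 / Real.sqrt 2 →
      1 / 4 ≤ μ ^ 4 * η₁ + μ ^ 4 * η₂ ∧ μ ^ 4 * η₁ + μ ^ 4 * η₂ ≤ 1 / 2) ∧
    (μ ^ 4 * η₁ + μ ^ 4 * η₂ ≤ 1 / 2 ∧ μ ^ 4 * η₁ + μ ^ 4 * η₂ < 1) := by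
  have hkey : (μ ^ 2 • T)ᵀ * (μ ^ 2 • T) = μ ^ 4 • (Tᵀ * T) := by
    rw [transpose_smul, smul_mul_assoc, mul_smul_comm, smul_smul]
    ring_nf
  have h4 : (0:ℝ) ≤ μ ^ 4 := by positivity
  have hμ4 : μ ^ 4 ≤ 1 / 4 := by
    have h2 : μ ^ 2 ≤ 1 / 2 := by
      have := mul_le_mul hμ1 hμ1 hμ0 (by positivity)
      calc μ ^ 2 = μ * μ := sq μ
        _ ≤ (1 / Real.sqrt 2) * (1 / Real.sqrt 2) := this
        _ = 1 / 2 := by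
            rw [div_mul_div_comm, one_mul, Real.mul_self_sqrt (by norm_num)]
    calc μ ^ 4 = μ ^ 2 * μ ^ 2 := by ring
      _ ≤ (1 / 2) * (1 / 2) := mul_le_mul h2 h2 (by positivity) (by norm_num)
      _ = 1 / 4 := by norm_num
  have hsum_lo : μ ^ 4 ≤ μ ^ 4 * η₁ + μ ^ 4 * η₂ := by
    calc μ ^ 4 = μ ^ 4 * 1 := (mul_one _).symm
      _ ≤ μ ^ 4 * (η₁ + η₂) := by exact mul_le_mul_of_nonneg_left hviol_lo h4
      _ = μ ^ 4 * η₁ + μ ^ 4 * η₂ := by ring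
  have hsum_hi : μ ^ 4 * η₁ + μ ^ 4 * η₂ ≤ 2 * μ ^ 4 := by
    have := mul_le_mul_of_nonneg_left hviol_hi h4
    linarith
  refine ⟨⟨?_, ?_, ?_⟩, ⟨hsum_lo, hsum_hi⟩, ?_, ?_, ?_⟩
  · rw [hkey]; exact smul_mem_spectrum_smul _ h4 _ _ hmem₁
  · rw [hkey]; exact smul_mem_spectrum_smul _ h4 _ _ hmem₂
  · rw [hkey]; exact smul_mem_spectrum_smul _ h4 _ _ hmem₃
  · intro hμ
    have : μ ^ 4 = 1 / 4 := by
      rw [hμ]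
      rw [div_pow, one_pow]
      have : (Real.sqrt 2) ^ 4 = 4 := by
        have hs : (Real.sqrt 2) ^ 2 = 2 := Real.sq_sqrt (by norm_num)
        calc (Real.sqrt 2) ^ 4 = ((Real.sqrt 2) ^ 2) ^ 2 := by ring
          _ = 2 ^ 2 := by rw [hs]
          _ = 4 := by norm_num
      rw [this]
    constructor <;> [linarith; linarith]
  · linarith
  · linarith
end

section
/- Let T be a real 3×3 matrix (the correlation matrix of a two-qubit state) and let U = Tᵀ T, a real symmetric positive-semidefinite matrix with eigenvalues η₁ ≥ η₂ ≥ η₃ ≥ 0. Suppose 1 ≤ η₁ + η₂ ≤ 2 (Bell-CHSH violation of the input state). Let μ be a real number with 0 ≤ μ ≤ 1/√2. Then the eigenvalues η′ᵢ = μ²ηᵢ of the matrix (μT)ᵀ(μT) associated to the output of the Buzek–Hillery state-dependent nonlocal cloner satisfy μ² ≤ η′₁ + η′₂ ≤ 2μ², so that 1/2 ≤ η′₁ + η′₂ ≤ 1 when μ = 1/√2; in all cases η′₁ + η′₂ ≤ 1, so the output state does not violate the Bell-CHSH inequality. (Impossibility of broadcasting Bell non-locality by the nonlocal state-dependent cloner.)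 -/
open Matrix

lemma smul_mem_spectrum_smul_s1 (c k : ℝ) (M : Matrix (Fin 3) (Fin 3) ℝ)
    (hk : k ∈ spectrum ℝ M) : c * k ∈ spectrum ℝ (c • M) := by
  rcases eq_or_ne c 0 with rfl | hc
  · simp only [zero_mul, zero_smul]
    rw [spectrum.zero_mem_iff]
    simp only [isUnit_zero_iff]
    exact fun h => one_ne_zero (Matrix.ext_iff.mpr h.symm 0 0)
  · have := (spectrum.smul_mem_smul_iff (R := ℝ) (A := Matrix (Fin 3) (Fin 3) ℝ)
      (a := M) (s := k) (r := Units.mk0 c hc)).mpr hk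
    simpa [Units.smul_def, smul_eq_mul] using this

/-- Impossibility of broadcasting Bell non-locality by the Buzek–Hillery
state-dependent *nonlocal* cloner, which scales the correlation matrix `T`
to `μ • T`, hence the eigenvalues of the Gram matrix to `μ² • ηᵢ`. -/
theorem broadcasting_bell_nonlocality_nonlocal_cloner_impossible
    (T : Matrix (Fin 3) (Fin 3) ℝ) (η₁ η₂ η₃ : ℝ)
    (hmem₁ : η₁ ∈ spectrum ℝ (Tᵀ * T))
    (hmem₂ : η₂ ∈ spectrum ℝ (Tᵀ * T))
    (hmem₃ : η₃ ∈ spectrum ℝ (Tᵀ * T))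
    (h12 : η₂ ≤ η₁) (h23 : η₃ ≤ η₂) (h3 : 0 ≤ η₃)
    (hviol_lo : 1 ≤ η₁ + η₂) (hviol_hi : η₁ + η₂ ≤ 2)
    (μ : ℝ) (hμ0 : 0 ≤ μ) (hμ1 : μ ≤ 1 / Real.sqrt 2) :
    (μ ^ 2 * η₁ ∈ spectrum ℝ ((μ • T)ᵀ * (μ • T)) ∧
      μ ^ 2 * η₂ ∈ spectrum ℝ ((μ • T)ᵀ * (μ • T)) ∧
      μ ^ 2 * η₃ ∈ spectrum ℝ ((μ • T)ᵀ * (μ • T))) ∧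
    (μ ^ 2 ≤ μ ^ 2 * η₁ + μ ^ 2 * η₂ ∧ μ ^ 2 * η₁ + μ ^ 2 * η₂ ≤ 2 * μ ^ 2) ∧
    (μ = 1 / Real.sqrt 2 →
      1 / 2 ≤ μ ^ 2 * η₁ + μ ^ 2 * η₂ ∧ μ ^ 2 * η₁ + μ ^ 2 * η₂ ≤ 1) ∧
    μ ^ 2 * η₁ + μ ^ 2 * η₂ ≤ 1 := by
  have hEq : (μ • T)ᵀ * (μ • T) = (μ ^ 2) • (Tᵀ * T) := by
    rw [transpose_smul, smul_mul_assoc, mul_smul_comm, smul_smul, sq]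
  have hμsq : μ ^ 2 ≤ 1 / 2 := by
    have h2 : (0:ℝ) < Real.sqrt 2 := Real.sqrt_pos.mpr (by norm_num)
    have := mul_self_le_mul_self hμ0 hμ1
    calc μ ^ 2 = μ * μ := sq μ
      _ ≤ (1 / Real.sqrt 2) * (1 / Real.sqrt 2) := this
      _ = 1 / 2 := by
          rw [div_mul_div_comm, one_mul, Real.mul_self_sqrt (by norm_num)]
  have hμ2nn : (0:ℝ) ≤ μ ^ 2 := sq_nonneg μ
  have hsum : μ ^ 2 * η₁ + μ ^ 2 * η₂ = μ ^ 2 * (η₁ + η₂) := by ring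
  refine ⟨⟨?_, ?_, ?_⟩, ⟨?_, ?_⟩, ?_, ?_⟩
  · rw [hEq]; exact smul_mem_spectrum_smul_s1 _ _ _ hmem₁
  · rw [hEq]; exact smul_mem_spectrum_smul_s1 _ _ _ hmem₂
  · rw [hEq]; exact smul_mem_spectrum_smul_s1 _ _ _ hmem₃
  · rw [hsum]; nlinarith
  · rw [hsum]; nlinarith
  · intro hμ
    have : μ ^ 2 = 1 / 2 := by
      rw [hμ, div_pow, one_pow, Real.sq_sqrt (by norm_num)]
    rw [hsum, this]
    constructor <;> nlinarith
  · rw [hsum]; nlinarith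
end

section
/- Let T be a real 3×3 matrix (the correlation matrix of a two-qubit state) and define F₃(T) = √(trace(TᵀT)), the three-setting CJWR steering functional (the square root of the sum of all three eigenvalues of TᵀT). Suppose the state is 3-steerable, i.e. 1 ≤ F₃(T) ≤ √3, equivalently 1 ≤ trace(TᵀT) ≤ 3. Let μ be a real number with 0 ≤ μ ≤ 1/√2. Then the output of the Buzek–Hillery state-dependent local cloner, with correlation matrix μ²T, satisfies μ⁴ ≤ trace((μ²T)ᵀ(μ²T)) ≤ 3μ⁴, hence 1/4 ≤ trace((μ²T)ᵀ(μ²T)) ≤ 3/4 when μ = 1/√2, and in all cases F₃(μ²T) = √(trace((μ²T)ᵀ(μ²T))) ≤ √3/2 < 1; the output state is 3-unsteerable. (Impossibility of broadcasting 3-steerability by the local state-dependent cloner.) -/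
open Matrix

/-- Impossibility of broadcasting 3-steerability by the Buzek–Hillery
state-dependent *local* cloner.  `F₃(T) = √(trace (Tᵀ * T))` is the
three-setting CJWR steering functional; a 3-steerable input satisfies
`1 ≤ trace (Tᵀ * T) ≤ 3`.  The local cloner scales `T` to `μ² • T` and the
output is 3-unsteerable. -/
theorem broadcasting_3steerability_local_cloner_impossible
    (T : Matrix (Fin 3) (Fin 3) ℝ)
    (hsteer_lo : 1 ≤ (Tᵀ * T).trace) (hsteer_hi : (Tᵀ * T).trace ≤ 3)
    (μ : ℝ) (hμ0 : 0 ≤ μ) (hμ1 : μ ≤ 1 / Real.sqrt 2) :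
    (μ ^ 4 ≤ ((μ ^ 2 • T)ᵀ * (μ ^ 2 • T)).trace ∧
      ((μ ^ 2 • T)ᵀ * (μ ^ 2 • T)).trace ≤ 3 * μ ^ 4) ∧
    (μ = 1 / Real.sqrt 2 →
      1 / 4 ≤ ((μ ^ 2 • T)ᵀ * (μ ^ 2 • T)).trace ∧
      ((μ ^ 2 • T)ᵀ * (μ ^ 2 • T)).trace ≤ 3 / 4) ∧
    (Real.sqrt (((μ ^ 2 • T)ᵀ * (μ ^ 2 • T)).trace) ≤ Real.sqrt 3 / 2 ∧
      Real.sqrt 3 / 2 < 1) := by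
  have key : ((μ ^ 2 • T)ᵀ * (μ ^ 2 • T)).trace = μ ^ 4 * (Tᵀ * T).trace := by
    rw [Matrix.transpose_smul, Matrix.smul_mul, Matrix.mul_smul, smul_smul,
      Matrix.trace_smul, smul_eq_mul]
    ring
  have hμ4 : 0 ≤ μ ^ 4 := by positivity
  have hμ2 : μ ^ 2 ≤ 1 / 2 := by
    have h2 : (0:ℝ) < Real.sqrt 2 := Real.sqrt_pos.mpr (by norm_num)
    have := mul_self_le_mul_self hμ0 hμ1
    calc μ ^ 2 = μ * μ := sq μ
      _ ≤ (1 / Real.sqrt 2) * (1 / Real.sqrt 2) := this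
      _ = 1 / 2 := by
          rw [div_mul_div_comm, one_mul, Real.mul_self_sqrt (by norm_num)]
  have hμ4le : μ ^ 4 ≤ 1 / 4 := by
    have h0 : (0:ℝ) ≤ μ ^ 2 := sq_nonneg μ
    calc μ ^ 4 = μ ^ 2 * μ ^ 2 := by ring
      _ ≤ (1/2) * (1/2) := mul_le_mul hμ2 hμ2 h0 (by norm_num)
      _ = 1 / 4 := by norm_num
  have hlo : μ ^ 4 ≤ ((μ ^ 2 • T)ᵀ * (μ ^ 2 • T)).trace := by
    rw [key]; nlinarith
  have hhi : ((μ ^ 2 • T)ᵀ * (μ ^ 2 • T)).trace ≤ 3 * μ ^ 4 := by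
    rw [key]; nlinarith
  refine ⟨⟨hlo, hhi⟩, ?_, ?_, ?_⟩
  · intro hμeq
    have h2 : μ ^ 4 = 1 / 4 := by
      rw [hμeq]
      rw [div_pow, one_pow]
      rw [show Real.sqrt 2 ^ 4 = (Real.sqrt 2 * Real.sqrt 2) * (Real.sqrt 2 * Real.sqrt 2) by ring,
        Real.mul_self_sqrt (by norm_num)]
      norm_num
    constructor
    · rw [key, h2]; linarith
    · rw [key, h2]; linarith
  · have h34 : ((μ ^ 2 • T)ᵀ * (μ ^ 2 • T)).trace ≤ 3 / 4 := by
      calc _ ≤ 3 * μ ^ 4 := hhi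
        _ ≤ 3 / 4 := by linarith
    calc Real.sqrt (((μ ^ 2 • T)ᵀ * (μ ^ 2 • T)).trace) ≤ Real.sqrt (3/4) :=
          Real.sqrt_le_sqrt h34
      _ = Real.sqrt 3 / 2 := by
          rw [show (3:ℝ)/4 = 3 / 2^2 by norm_num, Real.sqrt_div' , Real.sqrt_sq] <;> norm_num
  · have : Real.sqrt 3 < 2 := by
      have := Real.sq_sqrt (by norm_num : (3:ℝ) ≥ 0)
      nlinarith [Real.sqrt_nonneg 3]
    linarith
end

section
/- Let T be a real 3×3 matrix (the correlation matrix of a two-qubit state) and define F₃(T) = √(trace(TᵀT)). Suppose the state is 3-steerable, i.e. 1 ≤ trace(TᵀT) ≤ 3. Let μ be a real number with 0 ≤ μ ≤ 1/√6. Then the output of the Buzek–Hillery state-dependent nonlocal cloner, with correlation matrix μT, satisfies μ² ≤ trace((μT)ᵀ(μT)) ≤ 3μ², hence 1/6 ≤ trace((μT)ᵀ(μT)) ≤ 1/2 when μ = 1/√6, and in all cases F₃(μT) = √(trace((μT)ᵀ(μT))) ≤ 1/√2 < 1; the output state is 3-unsteerable. (Impossibility of broadcasting 3-steerability by the nonlocal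 state-dependent cloner.) -/
open Matrix

/-- Impossibility of broadcasting 3-steerability by the Buzek–Hillery
state-dependent *nonlocal* cloner, which scales the correlation matrix `T`
to `μ • T`, with `0 ≤ μ ≤ 1/√6`.  The output is 3-unsteerable. -/
theorem broadcasting_3steerability_nonlocal_cloner_impossible
    (T : Matrix (Fin 3) (Fin 3) ℝ)
    (hsteer_lo : 1 ≤ (Tᵀ * T).trace) (hsteer_hi : (Tᵀ * T).trace ≤ 3)
    (μ : ℝ) (hμ0 : 0 ≤ μ) (hμ1 : μ ≤ 1 / Real.sqrt 6) :
    (μ ^ 2 ≤ ((μ • T)ᵀ * (μ • T)).trace ∧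
      ((μ • T)ᵀ * (μ • T)).trace ≤ 3 * μ ^ 2) ∧
    (μ = 1 / Real.sqrt 6 →
      1 / 6 ≤ ((μ • T)ᵀ * (μ • T)).trace ∧
      ((μ • T)ᵀ * (μ • T)).trace ≤ 1 / 2) ∧
    (Real.sqrt (((μ • T)ᵀ * (μ • T)).trace) ≤ 1 / Real.sqrt 2 ∧
      1 / Real.sqrt 2 < 1) := by
  have key : ((μ • T)ᵀ * (μ • T)).trace = μ ^ 2 * (Tᵀ * T).trace := by
    rw [transpose_smul, smul_mul, Matrix.mul_smul, trace_smul, trace_smul]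
    simp [smul_smul, pow_two]; ring
  have h6 : (0:ℝ) < Real.sqrt 6 := Real.sqrt_pos.mpr (by norm_num)
  have hμsq : μ ^ 2 ≤ 1 / 6 := by
    have := pow_le_pow_left₀ hμ0 hμ1 2
    calc μ ^ 2 ≤ (1 / Real.sqrt 6) ^ 2 := this
      _ = 1 / 6 := by
        rw [div_pow, one_pow, Real.sq_sqrt (by norm_num : (6:ℝ) ≥ 0)]
  have hμ2nn : (0:ℝ) ≤ μ ^ 2 := sq_nonneg μ
  refine ⟨⟨?_, ?_⟩, ?_, ?_, ?_⟩
  · rw [key]; nlinarith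
  · rw [key]; nlinarith
  · intro hμ
    subst hμ
    have hsq : (1 / Real.sqrt 6) ^ 2 = 1 / 6 := by
      rw [div_pow, one_pow, Real.sq_sqrt (by norm_num : (6:ℝ) ≥ 0)]
    rw [key, hsq]
    constructor <;> nlinarith
  · have htr : ((μ • T)ᵀ * (μ • T)).trace ≤ 1 / 2 := by
      rw [key]; nlinarith
    calc Real.sqrt (((μ • T)ᵀ * (μ • T)).trace) ≤ Real.sqrt (1/2) :=
          Real.sqrt_le_sqrt htr
      _ = 1 / Real.sqrt 2 := by
          rw [one_div, one_div, Real.sqrt_inv]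
  · rw [div_lt_one (Real.sqrt_pos.mpr (by norm_num))]
    nlinarith [Real.sq_sqrt (by norm_num : (2:ℝ) ≥ 0), Real.sqrt_nonneg 2]
end

section
/- Let p be a real number with 0 ≤ p ≤ 1 (the parameter of a Werner state, whose Bloch representation is {0, 0, diag(p, −p, p)}), and let μ be a real number with 0 ≤ μ ≤ 1/√2. After applying the Buzek–Hillery state-dependent local cloner the output state has Bloch representation {0, 0, μ²·diag(p, −p, p)}, and its correlation matrix Gram matrix (μ²T)ᵀ(μ²T) has largest eigenvalue η_max = μ⁴p². This output satisfies the unsteerability criterion |x|² + 2√(η_max) ≤ 1, i.e. 2μ²p ≤ 1 holds for every such p and μ; hence every steerable Werner state becomes unsteerable (admits a local hidden state model under any number of measurement settings) after local state-dependent cloning. -/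
open Matrix

/-- A steerable Werner state (correlation matrix `diag (p, -p, p)`, vanishing
local Bloch vectors) becomes unsteerable after the Buzek–Hillery
state-dependent local cloner: the output has correlation matrix
`μ² • diag (p, -p, p)`, the largest eigenvalue of its Gram matrix is
`μ⁴ p²`, and the Bowles et al. unsteerability criterion
`|x|² + 2 √η_max ≤ 1`, i.e. `2 μ² p ≤ 1`, is satisfied. -/
theorem werner_unsteerable_after_local_cloning
    (p : ℝ) (hp0 : 0 ≤ p) (hp1 : p ≤ 1)
    (μ : ℝ) (hμ0 : 0 ≤ μ) (hμ1 : μ ≤ 1 / Real.sqrt 2) :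
    IsGreatest
      (spectrum ℝ ((μ ^ 2 • Matrix.diagonal ![p, -p, p])ᵀ *
        (μ ^ 2 • Matrix.diagonal ![p, -p, p])))
      (μ ^ 4 * p ^ 2) ∧
    ‖(0 : EuclideanSpace ℝ (Fin 3))‖ ^ 2 + 2 * Real.sqrt (μ ^ 4 * p ^ 2) ≤ 1 ∧
    2 * μ ^ 2 * p ≤ 1 := by
  have hμ2 : μ ^ 2 ≤ 1 / 2 := by
    have h2 : (0:ℝ) < Real.sqrt 2 := Real.sqrt_pos.2 (by norm_num)
    have := mul_self_le_mul_self hμ0 hμ1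
    calc μ ^ 2 = μ * μ := sq μ
      _ ≤ (1 / Real.sqrt 2) * (1 / Real.sqrt 2) := this
      _ = 1 / 2 := by
          rw [div_mul_div_comm, one_mul, Real.mul_self_sqrt (by norm_num)]
  have hkey : 2 * μ ^ 2 * p ≤ 1 := by
    calc 2 * μ ^ 2 * p ≤ 2 * (1/2) * 1 := by
          apply mul_le_mul _ hp1 hp0 (by norm_num)
          nlinarith
      _ = 1 := by norm_num
  have hM : ((μ ^ 2 • Matrix.diagonal ![p, -p, p])ᵀ *
        (μ ^ 2 • Matrix.diagonal ![p, -p, p])) =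
      Matrix.diagonal ![μ ^ 4 * p ^ 2, μ ^ 4 * p ^ 2, μ ^ 4 * p ^ 2] := by
    rw [transpose_smul, diagonal_transpose, smul_mul_assoc, mul_smul_comm,
      diagonal_mul_diagonal, smul_smul]
    ext i j
    fin_cases i <;> fin_cases j <;> simp [Matrix.diagonal] <;> ring
  constructor
  · rw [hM, spectrum_diagonal]
    constructor
    · exact ⟨0, rfl⟩
    · rintro x ⟨i, rfl⟩
      fin_cases i <;> simp
  · constructor
    · have : Real.sqrt (μ ^ 4 * p ^ 2) = μ ^ 2 * p := by
        rw [show μ ^ 4 * p ^ 2 = (μ ^ 2 * p) ^ 2 by ring,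
          Real.sqrt_sq (by positivity)]
      simp [this]
      nlinarith
    · exact hkey
end

section
/- Let c₁, c₂, c₃ be real numbers with −1 ≤ cᵢ ≤ 1 for i = 1, 2, 3 (the parameters of a Bell-diagonal state, whose Bloch representation is {0, 0, diag(c₁, c₂, c₃)}), and let μ be a real number with 0 ≤ μ ≤ 1/√2. After applying the Buzek–Hillery state-dependent local cloner the output state has Bloch representation {0, 0, μ²·diag(c₁, c₂, c₃)}, and the largest eigenvalue of its correlation Gram matrix is η_max = μ⁴·(max{|c₁|, |c₂|, |c₃|})². This output satisfies the unsteerability criterion |x|² + 2√(η_max) ≤ 1, i.e. 2μ²·max{|c₁|, |c₂|, |c₃|} ≤ 1 holds for all such cᵢ and μ; hence every steerable Bell-diagonal state becomes unsteerable (admits a local hidden state model under any number of measurement settings) after local state-dependent cloning. -/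
open Matrix

/-- A steerable Bell-diagonal state (correlation matrix `diag (c₁, c₂, c₃)`,
vanishing local Bloch vectors) becomes unsteerable after the Buzek–Hillery
state-dependent local cloner: the output has correlation matrix
`μ² • diag (c₁, c₂, c₃)`, the largest eigenvalue of its Gram matrix is
`μ⁴ (max {|c₁|, |c₂|, |c₃|})²`, and the Bowles et al. unsteerability
criterion `|x|² + 2 √η_max ≤ 1`, i.e. `2 μ² max {|c₁|, |c₂|, |c₃|} ≤ 1`,
is satisfied. -/
theorem bell_diagonal_unsteerable_after_local_cloning
    (c₁ c₂ c₃ : ℝ)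
    (hc₁ : -1 ≤ c₁ ∧ c₁ ≤ 1) (hc₂ : -1 ≤ c₂ ∧ c₂ ≤ 1) (hc₃ : -1 ≤ c₃ ∧ c₃ ≤ 1)
    (μ : ℝ) (hμ0 : 0 ≤ μ) (hμ1 : μ ≤ 1 / Real.sqrt 2) :
    IsGreatest
      (spectrum ℝ ((μ ^ 2 • Matrix.diagonal ![c₁, c₂, c₃])ᵀ *
        (μ ^ 2 • Matrix.diagonal ![c₁, c₂, c₃])))
      (μ ^ 4 * (max |c₁| (max |c₂| |c₃|)) ^ 2) ∧
    ‖(0 : EuclideanSpace ℝ (Fin 3))‖ ^ 2 +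
        2 * Real.sqrt (μ ^ 4 * (max |c₁| (max |c₂| |c₃|)) ^ 2) ≤ 1 ∧
    2 * μ ^ 2 * max |c₁| (max |c₂| |c₃|) ≤ 1 := by
  set m := max |c₁| (max |c₂| |c₃|) with hm
  have hm0 : 0 ≤ m := le_trans (abs_nonneg c₁) (le_max_left _ _)
  have hm1 : m ≤ 1 := by
    simp only [hm, max_le_iff]
    exact ⟨abs_le.mpr hc₁, abs_le.mpr hc₂, abs_le.mpr hc₃⟩
  have hμsq : μ ^ 2 ≤ 1 / 2 := by
    have h2 : (0:ℝ) < Real.sqrt 2 := Real.sqrt_pos.mpr (by norm_num)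
    have := pow_le_pow_left₀ hμ0 hμ1 2
    calc μ ^ 2 ≤ (1 / Real.sqrt 2) ^ 2 := this
      _ = 1 / 2 := by
        rw [div_pow, one_pow, Real.sq_sqrt (by norm_num : (0:ℝ) ≤ 2)]
  have hmat : (μ ^ 2 • Matrix.diagonal ![c₁, c₂, c₃])ᵀ *
      (μ ^ 2 • Matrix.diagonal ![c₁, c₂, c₃]) =
      Matrix.diagonal ![μ ^ 4 * c₁ ^ 2, μ ^ 4 * c₂ ^ 2, μ ^ 4 * c₃ ^ 2] := by
    ext i j
    fin_cases i <;> fin_cases j <;>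
      simp [Matrix.mul_apply, Fin.sum_univ_three, Matrix.diagonal] <;> ring
  have hlast : 2 * μ ^ 2 * m ≤ 1 := by
    calc 2 * μ ^ 2 * m ≤ 2 * (1/2) * 1 := by
          apply mul_le_mul _ hm1 hm0 (by norm_num)
          nlinarith
      _ = 1 := by norm_num
  have hsqrt : Real.sqrt (μ ^ 4 * m ^ 2) = μ ^ 2 * m := by
    rw [show μ ^ 4 * m ^ 2 = (μ ^ 2 * m) ^ 2 by ring,
      Real.sqrt_sq (by positivity)]
  refine ⟨?_, ?_, hlast⟩
  · rw [hmat, spectrum_diagonal]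
    constructor
    · have habs : m = |c₁| ∨ m = |c₂| ∨ m = |c₃| := by
        rcases max_cases |c₂| |c₃| with ⟨h23, _⟩ | ⟨h23, _⟩ <;>
          rcases max_cases |c₁| (max |c₂| |c₃|) with ⟨h1, _⟩ | ⟨h1, _⟩ <;>
          rw [hm, h1] <;> simp [h23]
      rcases habs with h | h | h
      · exact ⟨0, by simp only [Matrix.cons_val_zero]; rw [h, sq_abs]⟩
      · exact ⟨1, by simp only [Matrix.cons_val_one, Matrix.head_cons, Matrix.cons_val_zero]
                     rw [h, sq_abs]⟩
      · exact ⟨2, by show μ ^ 4 * c₃ ^ 2 = μ ^ 4 * m ^ 2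
                     rw [h, sq_abs]⟩
    · rintro x ⟨i, rfl⟩
      have key : ∀ c : ℝ, |c| ≤ m → μ ^ 4 * c ^ 2 ≤ μ ^ 4 * m ^ 2 := by
        intro c hc
        have : c ^ 2 ≤ m ^ 2 := by
          rw [← sq_abs c]; exact pow_le_pow_left₀ (abs_nonneg c) hc 2
        nlinarith [pow_nonneg hμ0 4]
      fin_cases i
      · exact key c₁ (le_max_left _ _)
      · exact key c₂ (le_trans (le_max_left _ _) (le_max_right _ _))
      · exact key c₃ (le_trans (le_max_right _ _) (le_max_right _ _))
  · rw [hsqrt]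
    simp only [norm_zero]
    nlinarith
end

section
/- Let T be a real 3×3 matrix with symmetric positive-semidefinite Gram matrix U = TᵀT having eigenvalues η₁ ≥ η₂ ≥ η₃ ≥ 0, and suppose η₁ + η₂ ≤ 2 (equivalently, every pair of eigenvalues of U at distinct indices sums to at most 2). Then for every real μ with 0 ≤ μ ≤ 1/√2, the Horodecki Bell-CHSH quantity of the state with correlation matrix μ²T satisfies S = 2√(μ⁴η₁ + μ⁴η₂) ≤ 2·√(1/2) = √2 < 2; that is, the maximal Bell-CHSH expectation value of the output of the Buzek–Hillery state-dependent local cloner never exceeds the local bound 2. -/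
open Matrix

/-- The Horodecki Bell-CHSH quantity of the output of the Buzek–Hillery
state-dependent local cloner never exceeds the local bound `2`: if the input
Gram matrix `Tᵀ * T` has eigenvalues `η₁ ≥ η₂ ≥ η₃ ≥ 0` with `η₁ + η₂ ≤ 2`,
then for every `0 ≤ μ ≤ 1/√2` the output (with correlation matrix `μ² • T`)
satisfies `S = 2 √(μ⁴ η₁ + μ⁴ η₂) ≤ 2 √(1/2) = √2 < 2`. -/
theorem chsh_value_after_local_cloning_below_local_bound
    (T : Matrix (Fin 3) (Fin 3) ℝ) (η₁ η₂ η₃ : ℝ)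
    (hmem₁ : η₁ ∈ spectrum ℝ (Tᵀ * T))
    (hmem₂ : η₂ ∈ spectrum ℝ (Tᵀ * T))
    (hmem₃ : η₃ ∈ spectrum ℝ (Tᵀ * T))
    (h12 : η₂ ≤ η₁) (h23 : η₃ ≤ η₂) (h3 : 0 ≤ η₃)
    (hsum : η₁ + η₂ ≤ 2) :
    ∀ μ : ℝ, 0 ≤ μ → μ ≤ 1 / Real.sqrt 2 →
      2 * Real.sqrt (μ ^ 4 * η₁ + μ ^ 4 * η₂) ≤ 2 * Real.sqrt (1 / 2) ∧
      2 * Real.sqrt (1 / 2) = Real.sqrt 2 ∧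
      Real.sqrt 2 < 2 := by
  intro μ hμ0 hμ
  have h2 : (0:ℝ) ≤ 2 := by norm_num
  have hμ2 : μ ^ 2 ≤ 1 / 2 := by
    have := pow_le_pow_left₀ hμ0 hμ 2
    calc μ ^ 2 ≤ (1 / Real.sqrt 2) ^ 2 := this
    _ = 1 / 2 := by
        rw [div_pow, Real.sq_sqrt h2]; norm_num
  have hμ4 : μ ^ 4 ≤ 1 / 4 := by
    have h0 : 0 ≤ μ ^ 2 := sq_nonneg μ
    calc μ ^ 4 = μ ^ 2 * μ ^ 2 := by ring
    _ ≤ (1/2) * (1/2) := mul_le_mul hμ2 hμ2 h0 (by norm_num)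
    _ = 1 / 4 := by norm_num
  have h4 : (0:ℝ) ≤ μ ^ 4 := by positivity
  refine ⟨?_, ?_, ?_⟩
  · have harg : μ ^ 4 * η₁ + μ ^ 4 * η₂ ≤ 1 / 2 := by
      calc μ ^ 4 * η₁ + μ ^ 4 * η₂ = μ ^ 4 * (η₁ + η₂) := by ring
      _ ≤ μ ^ 4 * 2 := by
          exact mul_le_mul_of_nonneg_left hsum h4
      _ ≤ (1/4) * 2 := by nlinarith
      _ = 1 / 2 := by norm_num
    exact mul_le_mul_of_nonneg_left (Real.sqrt_le_sqrt harg) h2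
  · rw [show (1:ℝ)/2 = 2⁻¹ by norm_num, Real.sqrt_inv]
    field_simp
    exact (Real.sq_sqrt h2).symm
  · have := Real.sq_sqrt h2
    nlinarith [Real.sqrt_nonneg 2, Real.sq_sqrt h2]
end
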